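/- Let k ≥ 1 and suppose 2k+1 = p·q for two distinct primes 3 ≤ p < q. Then every circulant matrix C(a_0,…,a_{2k}) of size (2k+1)×(2k+1) whose first row consists of exactly k entries equal to 1 and k+1 entries equal to 0 is nonsingular (has nonzero determinant). -/

import Mathlib

set_option maxHeartbeats 1600000

open Polynomial IntermediateField

/-- The circulant matrix whose `(i,j)` entry is `a (j - i)` (indices mod `n`). -/
def circulantMat {n : ℕ} (a : Fin n → ℚ) : Matrix (Fin n) (Fin n) ℚ :=
  Matrix.of fun i j => a (j - i)


/-- If `η^m = 1`, `η ≠ 1`, and the minimal polynomial of `η` over `K` has degree at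
least `m-1`, then any vanishing `K`-combination of `1, η, …, η^{m-1}` has all
coefficients equal. -/
lemma keyA (K : Type*) [Field K] [Algebra K ℂ] {m : ℕ} (hm : 2 ≤ m)
    (η : ℂ) (hη : η ^ m = 1) (hη1 : η ≠ 1)
    (hdeg : m - 1 ≤ (minpoly K η).natDegree) (c : Fin m → K)
    (h : ∑ i : Fin m, algebraMap K ℂ (c i) * η ^ (i : ℕ) = 0) :
    ∀ i i', c i = c i' := by
  have hm0 : 0 < m := by omega
  set top : Fin m := ⟨m - 1, by omega⟩ with htop
  set g : K[X] := ∑ i : Fin m, C (c i - c top) * X ^ (i : ℕ) with hg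
  have hgeom : ∑ i : Fin m, η ^ (i : ℕ) = 0 := by
    rw [Fin.sum_univ_eq_sum_range (fun i => η ^ i) m, geom_sum_eq hη1, hη, sub_self, zero_div]
  have hgev : aeval η g = 0 := by
    rw [hg, map_sum]
    have : ∀ i : Fin m, aeval η (C (c i - c top) * X ^ (i:ℕ))
        = algebraMap K ℂ (c i) * η ^ (i:ℕ) - algebraMap K ℂ (c top) * η ^ (i:ℕ) := by
      intro i
      simp [map_sub, sub_mul]
    rw [Finset.sum_congr rfl fun i _ => this i, Finset.sum_sub_distrib, h,
      ← Finset.mul_sum, hgeom, mul_zero, sub_zero]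
  have hcoeff : ∀ j : Fin m, g.coeff (j : ℕ) = c j - c top := by
    intro j
    rw [hg, finset_sum_coeff]
    have : ∀ i : Fin m, (C (c i - c top) * X ^ (i:ℕ)).coeff (j:ℕ)
        = if i = j then c i - c top else 0 := by
      intro i
      rw [coeff_C_mul, coeff_X_pow]
      by_cases hij : i = j
      · simp [hij]
      · have : (j:ℕ) ≠ (i:ℕ) := fun hh => hij (Fin.ext hh.symm)
        simp [hij, this]
    rw [Finset.sum_congr rfl fun i _ => this i, Finset.sum_ite_eq']
    simp
  have hgz : g = 0 := by
    by_contra hgz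
    have hdvd : minpoly K η ∣ g := minpoly.dvd K η hgev
    have hle : (minpoly K η).natDegree ≤ g.natDegree := natDegree_le_of_dvd hdvd hgz
    have hgle : g.natDegree ≤ m - 2 := by
      have : g = ∑ i ∈ Finset.univ.erase top, C (c i - c top) * X ^ (i : ℕ) := by
        rw [hg, ← Finset.add_sum_erase _ _ (Finset.mem_univ top)]
        simp
      rw [this]
      refine (natDegree_sum_le _ _).trans ?_
      rw [Finset.fold_max_le]
      refine ⟨by omega, ?_⟩
      intro i hi
      refine (natDegree_C_mul_X_pow_le _ _).trans ?_
      have : i ≠ top := (Finset.mem_erase.mp hi).1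
      have : (i : ℕ) ≠ m - 1 := fun hh => this (Fin.ext hh)
      have := i.isLt
      omega
    omega
  have : ∀ i : Fin m, c i = c top := by
    intro i
    have := hcoeff i
    rw [hgz, coeff_zero] at this
    exact sub_eq_zero.mp this.symm
  intro i i'
  rw [this i, this i']


lemma sum_eq_card {ι : Type*} [DecidableEq ι] (s : Finset ι) (f : ι → ℚ)
    (h : ∀ x ∈ s, f x = 0 ∨ f x = 1) :
    ∑ x ∈ s, f x = ((s.filter fun x => f x = 1).card : ℚ) := by
  classical
  rw [← Finset.sum_filter_add_sum_filter_not s (fun x => f x = 1)]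
  have h1 : ∑ x ∈ s.filter (fun x => f x = 1), f x
      = (s.filter fun x => f x = 1).card • (1:ℚ) := by
    rw [Finset.sum_congr rfl fun x hx => (Finset.mem_filter.mp hx).2, Finset.sum_const]
  have h2 : ∑ x ∈ s.filter (fun x => ¬ f x = 1), f x = 0 := by
    refine Finset.sum_eq_zero fun x hx => ?_
    rcases Finset.mem_filter.mp hx with ⟨hxs, hx1⟩
    rcases h x hxs with h0 | h1
    · exact h0
    · exact absurd h1 hx1
  rw [h1, h2]
  simp

lemma sum01 {ι : Type*} [DecidableEq ι] (s : Finset ι) (f : ι → ℚ)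
    (h : ∀ x ∈ s, f x = 0 ∨ f x = 1) : ∃ N : ℕ, ∑ x ∈ s, f x = N :=
  ⟨_, sum_eq_card s f h⟩

lemma prime_root_case {n P : ℕ} [NeZero n] (hP : P.Prime) (hdvd : P ∣ n)
    (z : ℂ) (hz : IsPrimitiveRoot z P) (a : Fin n → ℚ)
    (ha : ∀ j, a j = 0 ∨ a j = 1)
    (hzero : ∑ m : Fin n, (a m : ℂ) * z ^ (m : ℕ) = 0) :
    ∃ N : ℕ, ∑ m : Fin n, a m = ((P * N : ℕ) : ℚ) := by
  classical
  have hP2 : 2 ≤ P := hP.two_le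
  have hzP : z ^ P = 1 := hz.pow_eq_one
  have hz1 : z ≠ 1 := by
    intro h1
    have : P ∣ 1 := hz.dvd_of_pow_eq_one 1 (by simp [h1])
    rw [Nat.dvd_one] at this
    omega
  set fib : Fin n → Fin P := fun m => ⟨(m : ℕ) % P, Nat.mod_lt _ hP.pos⟩ with hfib
  set c : Fin P → ℚ := fun r => ∑ m ∈ Finset.univ.filter (fun m => fib m = r), a m with hc
  have hzmod : ∀ m : ℕ, z ^ (m % P) = z ^ m := by
    intro m
    conv_rhs => rw [← Nat.div_add_mod m P]
    rw [pow_add, pow_mul, hzP, one_pow, one_mul]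
  have hsum0 : ∑ r : Fin P, algebraMap ℚ ℂ (c r) * z ^ (r : ℕ) = 0 := by
    rw [← hzero, ← Finset.sum_fiberwise Finset.univ fib (fun m => (a m : ℂ) * z ^ (m:ℕ))]
    refine Finset.sum_congr rfl fun r _ => ?_
    rw [hc]
    push_cast [Finset.sum_mul]
    refine Finset.sum_congr rfl fun m hm => ?_
    have : fib m = r := (Finset.mem_filter.mp hm).2
    rw [← this, hfib, ← hzmod (m : ℕ)]
    rfl
  have hdeg : P - 1 ≤ (minpoly ℚ z).natDegree := by
    rw [← cyclotomic_eq_minpoly_rat hz hP.pos, natDegree_cyclotomic, Nat.totient_prime hP]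
  have hceq := keyA ℚ hP2 z hzP hz1 hdeg c hsum0
  set r0 : Fin P := ⟨0, hP.pos⟩ with hr0
  obtain ⟨N, hN⟩ := sum01 (Finset.univ.filter (fun m => fib m = r0)) a
    (fun x _ => ha x)
  refine ⟨N, ?_⟩
  have h1 : ∑ r : Fin P, c r = ∑ m : Fin n, a m := by
    simp only [hc]
    exact Finset.sum_fiberwise _ _ _
  have h2 : ∀ r, c r = (N : ℚ) := fun r => (hceq r r0).trans hN
  rw [← h1, Finset.sum_congr rfl fun r _ => h2 r, Finset.sum_const, Finset.card_univ,
    Fintype.card_fin]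
  push_cast
  ring


lemma int_of_pow_eq_one {N : ℕ} (hN : 0 < N) (w : ℂ) (hw : w ^ N = 1) : IsIntegral ℚ w := by
  refine ⟨X ^ N - 1, monic_X_pow_sub_C 1 hN.ne', ?_⟩
  simp [hw]

lemma geom_natDegree_le (q : ℕ) : (∑ i ∈ Finset.range q, (X : ℚ[X]) ^ i).natDegree ≤ q - 1 := by
  refine (natDegree_sum_le _ _).trans ?_
  rw [Finset.fold_max_le]
  refine ⟨Nat.zero_le _, fun i hi => ?_⟩
  have := Finset.mem_range.mp hi
  simp only [Function.comp, natDegree_X_pow]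
  omega

lemma geom_ne_zero (q : ℕ) (hq : 0 < q) : (∑ i ∈ Finset.range q, (X : ℚ[X]) ^ i) ≠ 0 := by
  intro h
  have := congrArg (fun r => Polynomial.coeff r 0) h
  simp only [finset_sum_coeff, coeff_X_pow, coeff_zero] at this
  rw [Finset.sum_eq_single 0 (fun b _ hb => by simp [Ne.symm hb]) (by simp [hq])] at this
  simp at this

lemma minpoly_deg_le_of_pow {q : ℕ} (hq2 : 2 ≤ q) (θ : ℂ) (hθq : θ ^ q = 1) (hθ1 : θ ≠ 1) :
    (minpoly ℚ θ).natDegree ≤ q - 1 := by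
  have hev : aeval θ (∑ i ∈ Finset.range q, (X : ℚ[X]) ^ i) = 0 := by
    rw [map_sum]
    simp only [map_pow, aeval_X]
    rw [geom_sum_eq hθ1, hθq, sub_self, zero_div]
  exact (natDegree_le_of_dvd (minpoly.dvd ℚ θ hev) (geom_ne_zero q (by omega))).trans
    (geom_natDegree_le q)

lemma minpoly_deg_bound {p q : ℕ} (hp : p.Prime) (hq : q.Prime) (hne : p ≠ q)
    (z : ℂ) (hz : IsPrimitiveRoot z (p * q)) :
    p - 1 ≤ (minpoly (↥(ℚ⟮(z ^ p : ℂ)⟯)) (z ^ q : ℂ)).natDegree := by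
  have hcop : Nat.Coprime p q := (Nat.coprime_primes hp hq).mpr hne
  have hp2 := hp.two_le
  have hq2 := hq.two_le
  have hnpos : 0 < p * q := by positivity
  set θ : ℂ := z ^ p with hθ
  set η : ℂ := z ^ q with hη
  have hzn : z ^ (p * q) = 1 := hz.pow_eq_one
  have hθq : θ ^ q = 1 := by rw [hθ, ← pow_mul, hzn]
  have hηp : η ^ p = 1 := by rw [hη, ← pow_mul, mul_comm, hzn]
  have hθ1 : θ ≠ 1 := by
    intro h
    have := hz.dvd_of_pow_eq_one p h
    have := Nat.le_of_dvd hp.pos this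
    nlinarith
  have hη1 : η ≠ 1 := by
    intro h
    have := hz.dvd_of_pow_eq_one q h
    have := Nat.le_of_dvd hq.pos this
    nlinarith
  have hθint : IsIntegral ℚ θ := int_of_pow_eq_one hq.pos θ hθq
  have hηint : IsIntegral ℚ η := int_of_pow_eq_one hp.pos η hηp
  have hzint : IsIntegral ℚ z := int_of_pow_eq_one hnpos z hzn
  set K : IntermediateField ℚ ℂ := ℚ⟮θ⟯ with hK
  haveI : FiniteDimensional ℚ K := IntermediateField.adjoin.finiteDimensional hθint
  have hηintK : IsIntegral K η := hηint.tower_top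
  set L : IntermediateField K ℂ := K⟮η⟯ with hL
  haveI : FiniteDimensional K L := IntermediateField.adjoin.finiteDimensional hηintK
  -- z ∈ L
  have hθK : θ ∈ K := IntermediateField.mem_adjoin_simple_self ℚ θ
  have hθL : θ ∈ L := by
    have := L.algebraMap_mem ⟨θ, hθK⟩
    simpa using this
  have hηL : η ∈ L := IntermediateField.mem_adjoin_simple_self K η
  have hzL : z ∈ L := by
    obtain ⟨aa, -, haa⟩ := Nat.exists_mul_mod_eq_one_of_coprime hcop.symm hp.one_lt
    obtain ⟨bb, -, hbb⟩ := Nat.exists_mul_mod_eq_one_of_coprime hcop hq.one_lt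
    -- q * aa + p * bb ≡ 1 mod p*q
    have h1 : (q * aa + p * bb) % p = 1 % p := by
      rw [Nat.add_mul_mod_self_left, haa, Nat.mod_eq_of_lt hp.one_lt]
    have h2 : (q * aa + p * bb) % q = 1 % q := by
      rw [Nat.add_comm, Nat.add_mul_mod_self_left, hbb, Nat.mod_eq_of_lt hq.one_lt]
    have hmod : (q * aa + p * bb) % (p * q) = 1 % (p * q) :=
      (Nat.modEq_and_modEq_iff_modEq_mul (a := q * aa + p * bb) (b := 1) hcop).mp ⟨h1, h2⟩
    have hpow : z ^ (q * aa + p * bb) = z := by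
      conv_rhs => rw [← pow_one z]
      rw [← Nat.div_add_mod (q * aa + p * bb) (p * q), pow_add, pow_mul, hzn, one_pow, one_mul,
        hmod, Nat.mod_eq_of_lt (by nlinarith)]
    have : z = η ^ aa * θ ^ bb := by
      rw [hη, hθ, ← pow_mul, ← pow_mul, ← pow_add, hpow]
    rw [this]
    exact mul_mem (pow_mem hηL aa) (pow_mem hθL bb)
  -- finrank computations
  have hrk1 : Module.finrank ℚ K = (minpoly ℚ θ).natDegree :=
    IntermediateField.adjoin.finrank hθint
  have hrk2 : Module.finrank K L = (minpoly K η).natDegree :=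
    IntermediateField.adjoin.finrank hηintK
  have hrkK : Module.finrank ℚ K ≤ q - 1 := by
    rw [hrk1]; exact minpoly_deg_le_of_pow hq2 θ hθq hθ1
  have hzfin : Module.finrank ℚ (ℚ⟮z⟯ : IntermediateField ℚ ℂ) = (p-1) * (q-1) := by
    rw [IntermediateField.adjoin.finrank hzint, ← cyclotomic_eq_minpoly_rat hz hnpos,
      natDegree_cyclotomic, Nat.totient_mul hcop, Nat.totient_prime hp, Nat.totient_prime hq]
  have hle : (ℚ⟮z⟯ : IntermediateField ℚ ℂ) ≤ L.restrictScalars ℚ := by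
    rw [IntermediateField.adjoin_le_iff]
    intro x hx
    rw [Set.mem_singleton_iff] at hx
    subst hx
    exact hzL
  haveI hfd : FiniteDimensional ℚ L := FiniteDimensional.trans ℚ K ↥L
  haveI : FiniteDimensional ℚ (L.restrictScalars ℚ) := hfd
  haveI : Module.Finite ℚ
      ↥(Subalgebra.toSubmodule (L.restrictScalars ℚ).toSubalgebra) :=
    inferInstanceAs (Module.Finite ℚ (L.restrictScalars ℚ))
  have hmono : Module.finrank ℚ (ℚ⟮z⟯ : IntermediateField ℚ ℂ)
      ≤ Module.finrank ℚ (L.restrictScalars ℚ) := by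
    have := Submodule.finrank_mono (R := ℚ) (M := ℂ)
      (s := Subalgebra.toSubmodule (ℚ⟮z⟯ : IntermediateField ℚ ℂ).toSubalgebra)
      (t := Subalgebra.toSubmodule (L.restrictScalars ℚ).toSubalgebra) ?_
    · exact this
    · exact fun x hx => hle hx
  have hmul : Module.finrank ℚ K * Module.finrank K L
      = Module.finrank ℚ (L.restrictScalars ℚ) := by
    exact Module.finrank_mul_finrank ℚ K L
  have : (p-1) * (q-1) ≤ (q-1) * (minpoly K η).natDegree := by
    calc (p-1) * (q-1) = Module.finrank ℚ (ℚ⟮z⟯ : IntermediateField ℚ ℂ) := hzfin.symm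
      _ ≤ Module.finrank ℚ (L.restrictScalars ℚ) := hmono
      _ = Module.finrank ℚ K * Module.finrank K L := hmul.symm
      _ ≤ (q-1) * (minpoly K η).natDegree := by
          rw [hrk2]; exact Nat.mul_le_mul_right _ hrkK
  have hq1pos : 0 < q - 1 := by omega
  calc p - 1 = ((p-1) * (q-1)) / (q-1) := by rw [Nat.mul_div_cancel _ hq1pos]
    _ ≤ ((q-1) * (minpoly K η).natDegree) / (q - 1) := Nat.div_le_div_right this
    _ = (minpoly K η).natDegree := by rw [mul_comm, Nat.mul_div_cancel _ hq1pos]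


lemma pq_root_case {n p q : ℕ} [NeZero n] (hp : p.Prime) (hq : q.Prime) (hne : p ≠ q)
    (hn : n = p * q) (z : ℂ) (hz : IsPrimitiveRoot z n) (a : Fin n → ℚ)
    (ha : ∀ j, a j = 0 ∨ a j = 1)
    (hzero : ∑ m : Fin n, (a m : ℂ) * z ^ (m : ℕ) = 0) :
    (∃ N : ℕ, ∑ m : Fin n, a m = ((p * N : ℕ) : ℚ)) ∨
    (∃ N : ℕ, ∑ m : Fin n, a m = ((q * N : ℕ) : ℚ)) := by
  classical
  have hcop : Nat.Coprime p q := (Nat.coprime_primes hp hq).mpr hne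
  have hp2 := hp.two_le
  have hq2 := hq.two_le
  have hnpos : 0 < n := Nat.pos_of_ne_zero (NeZero.ne n)
  have hzn : z ^ n = 1 := hz.pow_eq_one
  set θ : ℂ := z ^ p with hθ
  set η : ℂ := z ^ q with hη
  have hθq : θ ^ q = 1 := by rw [hθ, ← pow_mul, ← hn, hzn]
  have hηp : η ^ p = 1 := by rw [hη, ← pow_mul, mul_comm, ← hn, hzn]
  have hθ1 : θ ≠ 1 := by
    intro h
    have := Nat.le_of_dvd hp.pos (hz.dvd_of_pow_eq_one p h)
    nlinarith
  have hη1 : η ≠ 1 := by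
    intro h
    have := Nat.le_of_dvd hq.pos (hz.dvd_of_pow_eq_one q h)
    nlinarith
  -- the CRT bijection
  set φ : Fin p × Fin q → Fin n :=
    fun x => ⟨(q * (x.1 : ℕ) + p * (x.2 : ℕ)) % n, Nat.mod_lt _ hnpos⟩ with hφ
  have hφinj : Function.Injective φ := by
    intro x y hxy
    have hval : (q * (x.1:ℕ) + p * (x.2:ℕ)) % n = (q * (y.1:ℕ) + p * (y.2:ℕ)) % n := by
      simpa [hφ, Fin.ext_iff] using hxy
    have hmev : Nat.ModEq n (q * (x.1:ℕ) + p * (x.2:ℕ)) (q * (y.1:ℕ) + p * (y.2:ℕ)) := hval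
    have h1 : Nat.ModEq p (q * (x.1:ℕ)) (q * (y.1:ℕ)) := by
      have hmp : Nat.ModEq p (q * (x.1:ℕ) + p * (x.2:ℕ)) (q * (y.1:ℕ) + p * (y.2:ℕ)) :=
        hmev.of_dvd (hn ▸ Dvd.intro q rfl)
      have e1 : Nat.ModEq p (q * (x.1:ℕ)) (q * (x.1:ℕ) + p * (x.2:ℕ)) :=
        (Nat.modEq_iff_dvd' (Nat.le_add_right _ _)).mpr ⟨(x.2:ℕ), by omega⟩
      have e2 : Nat.ModEq p (q * (y.1:ℕ)) (q * (y.1:ℕ) + p * (y.2:ℕ)) :=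
        (Nat.modEq_iff_dvd' (Nat.le_add_right _ _)).mpr ⟨(y.2:ℕ), by omega⟩
      exact e1.trans (hmp.trans e2.symm)
    have h2 : Nat.ModEq q (p * (x.2:ℕ)) (p * (y.2:ℕ)) := by
      have hmp : Nat.ModEq q (q * (x.1:ℕ) + p * (x.2:ℕ)) (q * (y.1:ℕ) + p * (y.2:ℕ)) :=
        hmev.of_dvd (hn ▸ Dvd.intro_left p rfl)
      have e1 : Nat.ModEq q (p * (x.2:ℕ)) (q * (x.1:ℕ) + p * (x.2:ℕ)) :=
        (Nat.modEq_iff_dvd' (Nat.le_add_left _ _)).mpr ⟨(x.1:ℕ), by omega⟩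
      have e2 : Nat.ModEq q (p * (y.2:ℕ)) (q * (y.1:ℕ) + p * (y.2:ℕ)) :=
        (Nat.modEq_iff_dvd' (Nat.le_add_left _ _)).mpr ⟨(y.1:ℕ), by omega⟩
      exact e1.trans (hmp.trans e2.symm)
    have hx1 : (x.1:ℕ) = (y.1:ℕ) :=
      (Nat.ModEq.cancel_left_of_coprime hcop h1).eq_of_lt_of_lt x.1.isLt y.1.isLt
    have hx2 : (x.2:ℕ) = (y.2:ℕ) :=
      (Nat.ModEq.cancel_left_of_coprime hcop.symm h2).eq_of_lt_of_lt x.2.isLt y.2.isLt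
    exact Prod.ext (Fin.ext hx1) (Fin.ext hx2)
  have hφbij : Function.Bijective φ := by
    rw [Fintype.bijective_iff_injective_and_card]
    exact ⟨hφinj, by simp [hn]⟩
  set ε : Fin p → Fin q → ℚ := fun i j => a (φ (i, j)) with hε
  have hε01 : ∀ i j, ε i j = 0 ∨ ε i j = 1 := fun i j => ha _
  -- powers
  have hzφ : ∀ x : Fin p × Fin q, z ^ ((φ x : Fin n) : ℕ) = η ^ (x.1 : ℕ) * θ ^ (x.2 : ℕ) := by
    intro x
    have : z ^ ((q * (x.1:ℕ) + p * (x.2:ℕ)) % n) = z ^ (q * (x.1:ℕ) + p * (x.2:ℕ)) := by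
      conv_rhs => rw [← Nat.div_add_mod (q * (x.1:ℕ) + p * (x.2:ℕ)) n]
      rw [pow_add, pow_mul, hzn, one_pow, one_mul]
    rw [hφ]
    simp only []
    rw [this, pow_add, pow_mul, pow_mul, hη, hθ]
  -- total sum over pairs
  have hsum_pairs : ∀ g : Fin n → ℂ, ∑ x : Fin p × Fin q, g (φ x) = ∑ m : Fin n, g m :=
    fun g => Fintype.sum_bijective φ hφbij _ _ (fun x => rfl)
  -- the double sum equals zero
  have hdz : ∑ i : Fin p, (∑ j : Fin q, (ε i j : ℂ) * θ ^ (j:ℕ)) * η ^ (i:ℕ) = 0 := by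
    rw [← hzero, ← hsum_pairs (fun m => (a m : ℂ) * z ^ (m:ℕ))]
    have hterm : ∀ i : Fin p, (∑ j : Fin q, (ε i j : ℂ) * θ ^ (j:ℕ)) * η ^ (i:ℕ)
        = ∑ j : Fin q, (fun x : Fin p × Fin q => (a (φ x) : ℂ) * z ^ ((φ x : Fin n):ℕ)) (i, j) := by
      intro i
      rw [Finset.sum_mul]
      refine Finset.sum_congr rfl fun j _ => ?_
      show (ε i j : ℂ) * θ ^ (j:ℕ) * η ^ (i:ℕ)
          = (a (φ (i, j)) : ℂ) * z ^ ((φ (i, j) : Fin n) : ℕ)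
      rw [hzφ (i, j)]
      simp only [hε]
      ring
    rw [Finset.sum_congr rfl fun i _ => hterm i]
    exact (Fintype.sum_prod_type
      (fun x : Fin p × Fin q => (a (φ x) : ℂ) * z ^ ((φ x : Fin n) : ℕ))).symm
  -- the intermediate field
  set K : IntermediateField ℚ ℂ := ℚ⟮θ⟯ with hK
  have hθK : θ ∈ K := IntermediateField.mem_adjoin_simple_self ℚ θ
  set t : K := ⟨θ, hθK⟩ with ht
  set T : Fin p → K := fun i => ∑ j : Fin q, algebraMap ℚ K (ε i j) * t ^ (j:ℕ) with hT
  have halg : ∀ r : ℚ, algebraMap K ℂ (algebraMap ℚ K r) = (r : ℂ) := by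
    intro r
    rw [← IsScalarTower.algebraMap_apply ℚ K ℂ]
    exact eq_ratCast _ r
  have hTmap : ∀ i, algebraMap K ℂ (T i) = ∑ j : Fin q, (ε i j : ℂ) * θ ^ (j:ℕ) := by
    intro i
    rw [hT]
    simp only [map_sum, map_mul, map_pow, halg]
    rfl
  have hdegη : p - 1 ≤ (minpoly K η).natDegree := by
    have hz' : IsPrimitiveRoot z (p * q) := hn ▸ hz
    exact minpoly_deg_bound hp hq hne z hz'
  have hkey := keyA K hp2 η hηp hη1 hdegη T (by
    rw [← hdz]
    exact Finset.sum_congr rfl fun i _ => by rw [hTmap i])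
  -- row differences vanish
  set i0 : Fin p := ⟨0, hp.pos⟩ with hi0
  have hθprim : IsPrimitiveRoot θ q := hz.pow hnpos hn
  have hdegθ : q - 1 ≤ (minpoly ℚ θ).natDegree := by
    rw [← cyclotomic_eq_minpoly_rat hθprim hq.pos, natDegree_cyclotomic, Nat.totient_prime hq]
  have hkey2 : ∀ i : Fin p, ∀ j j' : Fin q, ε i j - ε i0 j = ε i j' - ε i0 j' := by
    intro i
    have hdiff : ∑ j : Fin q, algebraMap ℚ ℂ (ε i j - ε i0 j) * θ ^ (j:ℕ) = 0 := by
      have h1 := hTmap i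
      have h2 := hTmap i0
      rw [hkey i i0, h2] at h1
      have : ∀ j : Fin q, algebraMap ℚ ℂ (ε i j - ε i0 j) * θ ^ (j:ℕ)
          = (ε i j : ℂ) * θ ^ (j:ℕ) - (ε i0 j : ℂ) * θ ^ (j:ℕ) := by
        intro j
        rw [eq_ratCast (algebraMap ℚ ℂ)]
        push_cast
        ring
      rw [Finset.sum_congr rfl fun j _ => this j, Finset.sum_sub_distrib, h1, sub_self]
    exact keyA ℚ hq2 θ hθq hθ1 hdegθ (fun j => ε i j - ε i0 j) hdiff
  have hrect : ∀ (i i' : Fin p) (j j' : Fin q), ε i j + ε i' j' = ε i j' + ε i' j := by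
    intro i i' j j'
    have h1 := hkey2 i j j'
    have h2 := hkey2 i' j j'
    linarith
  set j0 : Fin q := ⟨0, hq.pos⟩ with hj0
  have hsum_pairsQ : ∑ x : Fin p × Fin q, a (φ x) = ∑ m : Fin n, a m :=
    Fintype.sum_bijective φ hφbij _ _ (fun x => rfl)
  by_cases hcol : ∀ (i : Fin p) (j j' : Fin q), ε i j = ε i j'
  · -- ε depends only on i ; total is divisible by q
    obtain ⟨N, hN⟩ := sum01 Finset.univ (fun i : Fin p => ε i j0) (fun i _ => hε01 i j0)
    refine Or.inr ⟨N, ?_⟩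
    rw [← hsum_pairsQ, Fintype.sum_prod_type]
    have : ∀ i : Fin p, ∑ j : Fin q, a (φ (i, j)) = (q : ℚ) * ε i j0 := by
      intro i
      have : ∀ j : Fin q, a (φ (i, j)) = ε i j0 := fun j => hcol i j j0
      rw [Finset.sum_congr rfl fun j _ => this j, Finset.sum_const, Finset.card_univ,
        Fintype.card_fin, nsmul_eq_mul]
    rw [Finset.sum_congr rfl fun i _ => this i, ← Finset.mul_sum, hN]
    push_cast
    ring
  · -- ε depends only on j ; total is divisible by p
    push_neg at hcol
    obtain ⟨i1, j1, j2, hne12⟩ := hcol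
    have hconst : ∀ (i i' : Fin p) (j : Fin q), ε i j = ε i' j := by
      intro i i' j
      by_contra hne3
      have hd1 : ε i j1 - ε i j2 = ε i1 j1 - ε i1 j2 := by
        have := hrect i i1 j1 j2; linarith
      have hd2 : ε i' j1 - ε i' j2 = ε i1 j1 - ε i1 j2 := by
        have := hrect i' i1 j1 j2; linarith
      have hd3 : ε i j1 - ε i' j1 = ε i j - ε i' j := by
        have := hrect i i' j1 j; linarith
      have hAB : ε i j1 ≠ ε i j2 := fun h => hne12 (by linarith)
      have hCD : ε i j1 - ε i j2 = ε i' j1 - ε i' j2 := by linarith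
      have hAC : ε i j1 ≠ ε i' j1 := fun h => hne3 (by linarith)
      rcases hε01 i j1 with h1 | h1 <;> rcases hε01 i j2 with h2 | h2 <;>
        rcases hε01 i' j1 with h3 | h3 <;> rcases hε01 i' j2 with h4 | h4 <;>
        simp only [h1, h2, h3, h4] at hAB hCD hAC <;> revert hAB hCD hAC <;> norm_num
    obtain ⟨N, hN⟩ := sum01 Finset.univ (fun j : Fin q => ε i0 j) (fun j _ => hε01 i0 j)
    refine Or.inl ⟨N, ?_⟩
    rw [← hsum_pairsQ, Fintype.sum_prod_type, Finset.sum_comm]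
    have : ∀ j : Fin q, ∑ i : Fin p, a (φ (i, j)) = (p : ℚ) * ε i0 j := by
      intro j
      have : ∀ i : Fin p, a (φ (i, j)) = ε i0 j := fun i => hconst i i0 j
      rw [Finset.sum_congr rfl fun i _ => this i, Finset.sum_const, Finset.card_univ,
        Fintype.card_fin, nsmul_eq_mul]
    rw [Finset.sum_congr rfl fun j _ => this j, ← Finset.mul_sum, hN]
    push_cast
    ring


section mat
open Fin.NatCast
variable {n : ℕ} [NeZero n]

noncomputable def shiftM (n : ℕ) [NeZero n] : Matrix (Fin n) (Fin n) ℚ :=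
  Matrix.of fun i j => if j = i + 1 then 1 else 0

lemma shiftM_pow (m : ℕ) :
    (shiftM n) ^ m = Matrix.of fun i j => if j = i + (m : Fin n) then 1 else 0 := by
  induction m with
  | zero =>
    ext i j
    simp [Matrix.one_apply, eq_comm]
  | succ m ih =>
    ext i j
    rw [pow_succ, ih]
    rw [Matrix.mul_apply]
    have : ∀ l : Fin n, (Matrix.of fun i j => if j = i + (m : Fin n) then (1:ℚ) else 0) i l
        * (shiftM n) l j = if l = i + (m : Fin n) then (if j = l + 1 then 1 else 0) else 0 := by
      intro l
      by_cases hl : l = i + (m : Fin n) <;> simp [shiftM, hl]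
    rw [Finset.sum_congr rfl fun l _ => this l, Finset.sum_ite_eq']
    have : ((m+1 : ℕ) : Fin n) = (m : Fin n) + 1 := by push_cast; ring
    simp [this, add_assoc]

lemma circulant_eq_sum (a : Fin n → ℚ) :
    circulantMat a = ∑ m : Fin n, algebraMap ℚ _ (a m) * (shiftM n) ^ (m : ℕ) := by
  ext i j
  rw [Matrix.sum_apply]
  have : ∀ m : Fin n, (algebraMap ℚ (Matrix (Fin n) (Fin n) ℚ) (a m) * (shiftM n) ^ (m:ℕ)) i j
      = if m = j - i then a m else 0 := by
    intro m
    rw [← Algebra.smul_def, Matrix.smul_apply]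
    have hcast : ((m : ℕ) : Fin n) = m := Fin.cast_val_eq_self m
    rw [shiftM_pow, Matrix.of_apply, hcast]
    have : (j = i + m) ↔ (m = j - i) := by
      rw [eq_sub_iff_add_eq', eq_comm]
    simp only [smul_eq_mul, mul_ite, mul_one, mul_zero]
    exact if_congr this rfl rfl
  rw [Finset.sum_congr rfl fun m _ => this m, Finset.sum_ite_eq']
  simp [circulantMat]

lemma shiftM_pow_n : (shiftM n) ^ n = 1 := by
  rw [shiftM_pow]
  ext i j
  simp [Matrix.one_apply, Fin.natCast_self, eq_comm]

end mat


noncomputable def fpoly {n : ℕ} (a : Fin n → ℚ) : ℚ[X] :=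
  ∑ m : Fin n, C (a m) * X ^ (m : ℕ)

lemma coprime_of_roots {n : ℕ} (hn : 0 < n) (a : Fin n → ℚ)
    (hroot : ∀ z : ℂ, z ^ n = 1 → ∑ m : Fin n, (a m : ℂ) * z ^ (m : ℕ) ≠ 0) :
    IsCoprime (fpoly a) (X ^ n - 1 : ℚ[X]) := by
  classical
  rw [← EuclideanDomain.gcd_isUnit_iff]
  by_contra hu
  set d : ℚ[X] := EuclideanDomain.gcd (fpoly a) (X ^ n - 1) with hd
  have hXn : (X ^ n - 1 : ℚ[X]) ≠ 0 := by
    have := Polynomial.monic_X_pow_sub_C (1 : ℚ) hn.ne'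
    simpa using this.ne_zero
  have hdvd1 : d ∣ fpoly a := EuclideanDomain.gcd_dvd_left _ _
  have hdvd2 : d ∣ (X ^ n - 1 : ℚ[X]) := EuclideanDomain.gcd_dvd_right _ _
  have hdne : d ≠ 0 := by
    intro h0
    rw [h0] at hdvd2
    exact hXn (zero_dvd_iff.mp hdvd2)
  have hdeg : 0 < d.degree := by
    rcases lt_or_ge 0 d.degree with h | h
    · exact h
    · exact absurd (Polynomial.isUnit_iff_degree_eq_zero.mpr
        (le_antisymm h (Polynomial.zero_le_degree_iff.mpr hdne))) hu
  have hdegC : 0 < (d.map (algebraMap ℚ ℂ)).degree := by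
    rwa [Polynomial.degree_map]
  obtain ⟨z, hz⟩ := Complex.exists_root hdegC
  have hzn : z ^ n = 1 := by
    have : (X ^ n - 1 : ℚ[X]).map (algebraMap ℚ ℂ) ≠ 0 ∨ True := Or.inr trivial
    obtain ⟨e, he⟩ := hdvd2
    have : ((X ^ n - 1 : ℚ[X]).map (algebraMap ℚ ℂ)).eval z = 0 := by
      rw [he, Polynomial.map_mul, Polynomial.eval_mul, hz.eq_zero, zero_mul]
    simpa [sub_eq_zero] using this
  have hfz : ((fpoly a).map (algebraMap ℚ ℂ)).eval z = 0 := by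
    obtain ⟨e, he⟩ := hdvd1
    rw [he, Polynomial.map_mul, Polynomial.eval_mul, hz.eq_zero, zero_mul]
  have : ∑ m : Fin n, (a m : ℂ) * z ^ (m : ℕ) = 0 := by
    rw [← hfz, fpoly, Polynomial.map_sum, Polynomial.eval_finset_sum]
    refine Finset.sum_congr rfl fun m _ => ?_
    simp [eq_ratCast]
  exact hroot z hzn this


lemma det_ne_zero {n : ℕ} [NeZero n] (a : Fin n → ℚ)
    (hroot : ∀ z : ℂ, z ^ n = 1 → ∑ m : Fin n, (a m : ℂ) * z ^ (m : ℕ) ≠ 0) :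
    (circulantMat a).det ≠ 0 := by
  have hn : 0 < n := Nat.pos_of_ne_zero (NeZero.ne n)
  obtain ⟨u, v, huv⟩ := coprime_of_roots hn a hroot
  have h1 : aeval (shiftM n) (fpoly a) = circulantMat a := by
    rw [circulant_eq_sum, fpoly, map_sum]
    exact Finset.sum_congr rfl fun m _ => by simp [Algebra.smul_def]
  have h2 : aeval (shiftM n) ((X : ℚ[X]) ^ n - 1) = 0 := by
    rw [map_sub, map_one, map_pow, aeval_X, shiftM_pow_n, sub_self]
  have := congrArg (aeval (shiftM n)) huv
  rw [map_add, map_mul, map_mul, h1, h2, mul_zero, add_zero, map_one] at this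
  have hunit : IsUnit (circulantMat a) := (Matrix.isUnit_iff_isUnit_det _).mpr (Matrix.isUnit_det_of_left_inverse this)
  have := (Matrix.isUnit_iff_isUnit_det _).mp hunit
  exact this.ne_zero


lemma arith_contra (k P N : ℕ) (hP : 2 ≤ P) (hdvd : P ∣ 2*k+1) (hk : k = P*N) : False := by
  have h2k : P ∣ 2*k := ⟨2*N, by rw [hk]; ring⟩
  have h1 : P ∣ 1 := by
    have := Nat.dvd_sub hdvd h2k
    simpa using this
  rw [Nat.dvd_one] at h1
  omega

theorem stmt_5 (k p q : ℕ) (hk : 1 ≤ k) (hp : p.Prime) (hq : q.Prime)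
    (hp3 : 3 ≤ p) (hpq : p < q) (hfac : 2 * k + 1 = p * q)
    (a : Fin (2 * k + 1) → ℚ)
    (ha : ∀ j, a j = 0 ∨ a j = 1)
    (hcard : (Finset.univ.filter fun j => a j = 1).card = k) :
    (circulantMat a).det ≠ 0 := by
  classical
  haveI : NeZero (2 * k + 1) := ⟨by omega⟩
  have hne : p ≠ q := Nat.ne_of_lt hpq
  apply det_ne_zero a
  intro z hzn hs
  -- sum of entries is k
  have hsumk : ∑ m : Fin (2*k+1), a m = (k : ℚ) := by
    rw [sum_eq_card Finset.univ a (fun x _ => ha x), hcard]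
  have hfin : IsOfFinOrder z := isOfFinOrder_iff_pow_eq_one.mpr ⟨2*k+1, by omega, hzn⟩
  have hddvd : orderOf z ∣ p * q := hfac ▸ orderOf_dvd_of_pow_eq_one hzn
  have hprim : IsPrimitiveRoot z (orderOf z) := IsPrimitiveRoot.orderOf z
  obtain ⟨d1, d2, hd1, hd2, hd12⟩ := Nat.dvd_mul.mp hddvd
  have hpdvd : p ∣ 2*k+1 := hfac ▸ ⟨q, rfl⟩
  have hqdvd : q ∣ 2*k+1 := hfac ▸ ⟨p, mul_comm p q⟩
  rcases hp.eq_one_or_self_of_dvd d1 hd1 with h1 | h1 <;>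
    rcases hq.eq_one_or_self_of_dvd d2 hd2 with h2 | h2
  · -- orderOf z = 1, z = 1
    have hz1 : z = 1 := orderOf_eq_one_iff.mp (by rw [← hd12, h1, h2, one_mul])
    rw [hz1] at hs
    simp only [one_pow, mul_one] at hs
    have h0 : ((∑ m : Fin (2*k+1), a m : ℚ) : ℂ) = 0 := by push_cast; exact hs
    rw [hsumk] at h0
    have : (k : ℚ) = 0 := by exact_mod_cast h0
    have : k = 0 := by exact_mod_cast this
    omega
  · -- orderOf z = q
    have hdq : orderOf z = q := by rw [← hd12, h1, h2, one_mul]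
    obtain ⟨N, hN⟩ := prime_root_case hq (hdq ▸ hqdvd) z (hdq ▸ hprim) a ha hs
    rw [hsumk] at hN
    have : k = q * N := by exact_mod_cast hN
    exact arith_contra k q N hq.two_le hqdvd this
  · -- orderOf z = p
    have hdp : orderOf z = p := by rw [← hd12, h1, h2, mul_one]
    obtain ⟨N, hN⟩ := prime_root_case hp (hdp ▸ hpdvd) z (hdp ▸ hprim) a ha hs
    rw [hsumk] at hN
    have : k = p * N := by exact_mod_cast hN
    exact arith_contra k p N hp.two_le hpdvd this
  · -- orderOf z = p * q
    have hdpq : orderOf z = p * q := by rw [← hd12, h1, h2]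
    have hz' : IsPrimitiveRoot z (2*k+1) := by rw [hfac, ← hdpq]; exact hprim
    rcases pq_root_case hp hq hne hfac z hz' a ha hs with ⟨N, hN⟩ | ⟨N, hN⟩
    · rw [hsumk] at hN
      have : k = p * N := by exact_mod_cast hN
      exact arith_contra k p N hp.two_le hpdvd this
    · rw [hsumk] at hN
      have : k = q * N := by exact_mod_cast hN
      exact arith_contra k q N hq.two_le hqdvd this
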